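/- Under the previous hypotheses (H₀ strongly regular diagonal, H₁ fully connected), an isospectral pair (ρ₁, ρ₂) of Hermitian matrices satisfies Tr(Bₘ[ρ₁,ρ₂]) = 0 for all m ≥ 1 if and only if [ρ₁, ρ₂] is a diagonal matrix. -/
import Mathlib

open Matrix Polynomial

lemma vanish_of_power_sums {ι : Type*} [DecidableEq ι] (s : Finset ι) (ω x : ι → ℂ)
    (hinj : Set.InjOn ω s) (hnz : ∀ p ∈ s, ω p ≠ 0)
    (hsum : ∀ m : ℕ, 1 ≤ m → ∑ p ∈ s, x p * ω p ^ m = 0) :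
    ∀ p ∈ s, x p = 0 := by
  have key : ∀ P : ℂ[X], P.coeff 0 = 0 → ∑ p ∈ s, x p * P.eval (ω p) = 0 := by
    intro P hP
    have : ∀ p, P.eval (ω p) = ∑ m ∈ P.support, P.coeff m * ω p ^ m := by
      intro p; rw [Polynomial.eval_eq_sum]; rfl
    simp_rw [this, Finset.mul_sum]
    rw [Finset.sum_comm]
    refine Finset.sum_eq_zero fun m hm => ?_
    have hm1 : 1 ≤ m := by
      rcases Nat.eq_zero_or_pos m with h | h
      · exact absurd (h ▸ hP) (Polynomial.mem_support_iff.mp hm)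
      · exact h
    have h0 := hsum m hm1
    calc ∑ p ∈ s, x p * (P.coeff m * ω p ^ m)
        = P.coeff m * ∑ p ∈ s, x p * ω p ^ m := by
          rw [Finset.mul_sum]; apply Finset.sum_congr rfl; intros; ring
      _ = 0 := by rw [h0, mul_zero]
  intro p hp
  have h := key (Polynomial.X * Lagrange.basis s ω p) (by simp)
  rw [Finset.sum_eq_single p] at h
  · simp only [Polynomial.eval_mul, Polynomial.eval_X,
      Lagrange.eval_basis_self hinj hp, mul_one] at h
    rcases mul_eq_zero.mp h with h | h
    · exact h
    · exact absurd h (hnz p hp)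
  · intro q hq hqp
    simp [Polynomial.eval_mul, Lagrange.eval_basis_of_ne (Ne.symm hqp) hq]
  · intro h'; exact absurd hp h'

/-- The iterated adjoint brackets B₀ = −iH₁, B_{m+1} = [−iH₀, Bₘ]. -/
noncomputable def adB {n : ℕ} (H₀ H₁ : Matrix (Fin n) (Fin n) ℂ) : ℕ → Matrix (Fin n) (Fin n) ℂ
  | 0 => (-Complex.I) • H₁
  | m + 1 => ((-Complex.I) • H₀) * adB H₀ H₁ m - adB H₀ H₁ m * ((-Complex.I) • H₀)

lemma adB_apply {n : ℕ} (a : Fin n → ℝ) (H₀ H₁ : Matrix (Fin n) (Fin n) ℂ)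
    (hH₀ : H₀ = Matrix.diagonal (fun k => (a k : ℂ))) (m : ℕ) (k l : Fin n) :
    adB H₀ H₁ m k l = (-Complex.I) ^ (m + 1) * ((a k : ℂ) - a l) ^ m * H₁ k l := by
  induction m with
  | zero => simp [adB]
  | succ m ih =>
    have h1 : (((-Complex.I) • H₀) * adB H₀ H₁ m) k l
        = (-Complex.I) * (a k : ℂ) * adB H₀ H₁ m k l := by
      rw [hH₀, smul_mul_assoc, Matrix.smul_apply, Matrix.diagonal_mul]
      simp only [smul_eq_mul]; ring
    have h2 : (adB H₀ H₁ m * ((-Complex.I) • H₀)) k l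
        = adB H₀ H₁ m k l * ((-Complex.I) * (a l : ℂ)) := by
      rw [hH₀, mul_smul_comm, Matrix.smul_apply, Matrix.mul_diagonal]
      simp only [smul_eq_mul]; ring
    show (((-Complex.I) • H₀) * adB H₀ H₁ m - adB H₀ H₁ m * ((-Complex.I) • H₀)) k l
        = _
    rw [Matrix.sub_apply, h1, h2, ih]
    ring

theorem stmt_7 {n : ℕ} (a : Fin n → ℝ) (H₀ H₁ : Matrix (Fin n) (Fin n) ℂ)
    (hH₀ : H₀ = Matrix.diagonal (fun k => (a k : ℂ)))
    (hH₁ : H₁.IsHermitian)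
    (hconn : ∀ k l : Fin n, k ≠ l → H₁ k l ≠ 0)
    (hreg₀ : ∀ k l : Fin n, k < l → a l - a k ≠ 0)
    (hreg : ∀ k l p q : Fin n, k < l → p < q →
      |a l - a k| = |a q - a p| → k = p ∧ l = q)
    (ρ₁ ρ₂ : Matrix (Fin n) (Fin n) ℂ)
    (hρ₁ : ρ₁.IsHermitian) (hρ₂ : ρ₂.IsHermitian)
    (hiso : ρ₁.charpoly = ρ₂.charpoly) :
    (∀ m : ℕ, 1 ≤ m → (adB H₀ H₁ m * (ρ₁ * ρ₂ - ρ₂ * ρ₁)).trace = 0) ↔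
      (ρ₁ * ρ₂ - ρ₂ * ρ₁).IsDiag := by
  set C := ρ₁ * ρ₂ - ρ₂ * ρ₁ with hC
  -- a is injective
  have hane : ∀ k l : Fin n, k ≠ l → a k ≠ a l := by
    intro k l hkl
    rcases lt_or_gt_of_ne hkl with h | h
    · intro he; exact hreg₀ k l h (by rw [he]; ring)
    · intro he; exact hreg₀ l k h (by rw [he]; ring)
  -- trace formula
  have htr : ∀ m : ℕ, (adB H₀ H₁ m * C).trace
      = ∑ k : Fin n, ∑ l : Fin n, adB H₀ H₁ m k l * C l k := by
    intro m
    simp [Matrix.trace, Matrix.diag, Matrix.mul_apply]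
  constructor
  · intro h
    -- use the power-sum lemma on ordered pairs
    set s : Finset (Fin n × Fin n) := Finset.univ.filter (fun p => p.1 ≠ p.2) with hs
    set ω : Fin n × Fin n → ℂ := fun p => (a p.1 : ℂ) - a p.2 with hω
    set x : Fin n × Fin n → ℂ := fun p => H₁ p.1 p.2 * C p.2 p.1 with hx
    have hinj : Set.InjOn ω s := by
      intro p hp q hq hpq
      have hp' : p.1 ≠ p.2 := (Finset.mem_filter.mp hp).2
      have hq' : q.1 ≠ q.2 := (Finset.mem_filter.mp hq).2
      have heq : a p.1 - a p.2 = a q.1 - a q.2 := by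
        have := hpq
        simp only [hω] at this
        exact_mod_cast sub_eq_sub_iff_add_eq_add.mpr (by exact_mod_cast sub_eq_sub_iff_add_eq_add.mp this)
      -- case analysis
      have main : p.1 = q.1 ∧ p.2 = q.2 := by
        rcases lt_or_gt_of_ne hp' with h1 | h1 <;> rcases lt_or_gt_of_ne hq' with h2 | h2
        · -- p.1 < p.2, q.1 < q.2
          have := hreg p.1 p.2 q.1 q.2 h1 h2 (by rw [abs_sub_comm (a p.2), abs_sub_comm (a q.2), heq])
          exact this
        · -- p.1 < p.2, q.2 < q.1
          have := hreg p.1 p.2 q.2 q.1 h1 h2 (by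
            rw [abs_sub_comm (a p.2)]
            rw [show a p.1 - a p.2 = a q.1 - a q.2 from heq])
          exfalso
          have h3 : a p.1 = a q.2 := by rw [this.1]
          have h4 : a p.2 = a q.1 := by rw [this.2]
          have : a p.1 - a p.2 = a p.2 - a p.1 := by rw [heq, h3, h4]
          have : a p.1 = a p.2 := by linarith
          exact hane p.1 p.2 hp' this
        · -- p.2 < p.1, q.1 < q.2
          have := hreg p.2 p.1 q.1 q.2 h1 h2 (by
            rw [abs_sub_comm (a q.2)]
            rw [show a p.1 - a p.2 = a q.1 - a q.2 from heq])
          exfalso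
          have h3 : a p.2 = a q.1 := by rw [this.1]
          have h4 : a p.1 = a q.2 := by rw [this.2]
          have : a p.1 - a p.2 = a p.2 - a p.1 := by rw [heq, h3, h4]
          have : a p.1 = a p.2 := by linarith
          exact hane p.1 p.2 hp' this
        · -- p.2 < p.1, q.2 < q.1
          have := hreg p.2 p.1 q.2 q.1 h1 h2 (by rw [heq])
          exact ⟨this.2, this.1⟩
      exact Prod.ext main.1 main.2
    have hnz : ∀ p ∈ s, ω p ≠ 0 := by
      intro p hp
      have hp' : p.1 ≠ p.2 := (Finset.mem_filter.mp hp).2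
      simp only [hω, sub_ne_zero]
      exact_mod_cast fun he => hane p.1 p.2 hp' (by exact_mod_cast he)
    have hsum : ∀ m : ℕ, 1 ≤ m → ∑ p ∈ s, x p * ω p ^ m = 0 := by
      intro m hm
      have h0 := h m hm
      rw [htr m] at h0
      have hrw : ∀ k l : Fin n, adB H₀ H₁ m k l * C l k
          = (-Complex.I) ^ (m + 1) * (x (k, l) * ω (k, l) ^ m) := by
        intro k l
        rw [adB_apply a H₀ H₁ hH₀ m k l]
        simp only [hx, hω]
        ring
      have h1 : ∑ p ∈ s, x p * ω p ^ m
          = ∑ p : Fin n × Fin n, x p * ω p ^ m := by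
        rw [hs]
        rw [Finset.sum_filter]
        apply Finset.sum_congr rfl
        intro p _
        by_cases hp : p.1 ≠ p.2
        · simp [hp]
        · push_neg at hp
          have hω0 : ω p = 0 := by simp [hω, hp]
          simp [hω0, zero_pow (show m ≠ 0 by omega)]
      rw [h1]
      have h2 : ∑ k : Fin n, ∑ l : Fin n, adB H₀ H₁ m k l * C l k
          = (-Complex.I) ^ (m + 1) * ∑ p : Fin n × Fin n, x p * ω p ^ m := by
        rw [Finset.mul_sum, ← Finset.sum_product']
        apply Finset.sum_congr rfl
        intro p _
        exact hrw p.1 p.2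
      rw [h2] at h0
      rcases mul_eq_zero.mp h0 with h' | h'
      · exact absurd h' (pow_ne_zero _ (neg_ne_zero.mpr Complex.I_ne_zero))
      · exact h'
    have hvanish := vanish_of_power_sums s ω x hinj hnz hsum
    intro i j hij
    have hmem : (j, i) ∈ s := Finset.mem_filter.mpr ⟨Finset.mem_univ _, Ne.symm hij⟩
    have := hvanish (j, i) hmem
    simp only [hx] at this
    rcases mul_eq_zero.mp this with h' | h'
    · exact absurd h' (hconn j i (Ne.symm hij))
    · exact h'
  · intro hdiag m hm
    rw [htr m]
    apply Finset.sum_eq_zero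
    intro k _
    apply Finset.sum_eq_zero
    intro l _
    by_cases hkl : l = k
    · subst hkl
      rw [adB_apply a H₀ H₁ hH₀ m l l]
      simp [zero_pow (by omega : m ≠ 0)]
    · rw [hdiag hkl, mul_zero]
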